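/- Let H be a real Hilbert space, α ∈ (0, 1/2], T : H → H an α-averaged nonexpansive operator with Fix(T) ≠ ∅, t ∈ (0,1), and let (x^k) be a TKMA sequence for T: x^{k+1} = (1−t)T²x^k + t T^{θ_k}x^k with θ_k := −⟨Tx^k − x^k, Tx^k − T²x^k⟩ / ‖Tx^k − x^k‖² and Tx^k ≠ x^k for all k. Then the series ∑_{k=0}^∞ ‖Tx^k − x^k‖² converges; more precisely, for any x̂ ∈ Fix(T), ((1−t)²(1−α)/α) · ∑_{k=0}^∞ ‖Tx^k − x^k‖² ≤ ‖x⁰ − x̂‖². -/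

import Mathlib

open RealInnerProductSpace Filter Topology

/-- `T` is nonexpansive: `‖T x − T y‖ ≤ ‖x − y‖` for all `x, y`. -/
def Nonexpansive {H : Type*} [NormedAddCommGroup H] [InnerProductSpace ℝ H]
    (T : H → H) : Prop :=
  ∀ x y, ‖T x - T y‖ ≤ ‖x - y‖

/-- `T` is `α`-averaged nonexpansive: `T = (1−α)I + αN` for a nonexpansive `N`. -/
def AveragedNE {H : Type*} [NormedAddCommGroup H] [InnerProductSpace ℝ H]
    (α : ℝ) (T : H → H) : Prop :=
  ∃ N : H → H, Nonexpansive N ∧ ∀ x, T x = (1 - α) • x + α • N x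

private lemma fle (β t θ : ℝ) (hβ : 1 ≤ β) (ht0 : 0 < t) (ht1 : t < 1) (hθ : θ^2 ≤ 1) :
    (1 - 2*(1-t)*β)*θ^2 + 2*t*(1-β)*θ - t*(2-t)*(2*β-1) ≤ 0 := by
  have hθ1 : -1 ≤ θ := by nlinarith [sq_nonneg (θ+1)]
  have hθ2 : θ ≤ 1 := by nlinarith [sq_nonneg (θ-1)]
  rcases le_or_gt (2*(1-t)*β - 1) 0 with hQ | hQ
  · have hA : 0 ≤ 2*β*(1+2*t-t^2) - (1+4*t-t^2) := by nlinarith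
    have hB : 0 ≤ (1-t^2)*(2*β-1) := by nlinarith
    nlinarith [mul_nonneg (by linarith : (0:ℝ) ≤ 1+θ) hA,
      mul_nonneg (by linarith : (0:ℝ) ≤ 1-θ) hB,
      mul_nonneg (neg_nonneg.2 hQ) (by nlinarith : (0:ℝ) ≤ 1-θ^2)]
  · rcases le_or_gt (t*(β-1)) (2*(1-t)*β - 1) with hc | hc
    · have hbr : 0 ≤ (2-t)*(2*β-1)*(2*(1-t)*β - 1) - t*(β-1)^2 := by nlinarith
      have hQf : (2*(1-t)*β - 1) *
          ((1 - 2*(1-t)*β)*θ^2 + 2*t*(1-β)*θ - t*(2-t)*(2*β-1)) ≤ 0 := by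
        nlinarith [sq_nonneg ((2*(1-t)*β - 1)*θ + t*(β-1)), mul_nonneg ht0.le hbr]
      by_contra h
      push_neg at h
      nlinarith [mul_pos hQ h]
    · have h1 : 0 ≤ 2*t*(β-1) - (2*(1-t)*β - 1)*(1-θ) := by
        nlinarith [mul_nonneg hQ.le (by linarith : (0:ℝ) ≤ 1+θ)]
      nlinarith [mul_nonneg (by linarith : (0:ℝ) ≤ 1+θ) h1]

private lemma scalar (β t θ R S : ℝ) (hβ : 1 ≤ β) (ht0 : 0 < t) (ht1 : t < 1)
    (hθ : θ^2 ≤ 1) (hR : 0 ≤ R) (hS1 : θ^2*R ≤ S) (hS2 : S ≤ R) :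
    ((1+t*θ)^2 + 2*t*(1-t)*θ^2 - 2*β*(1+t*θ))*R + ((1-t)^2 - 2*(1-t)*β)*S
      + (1-t)^2*(2*β-1)*R ≤ 0 := by
  have hf := fle β t θ hβ ht0 ht1 hθ
  have hcoef : (1-t)^2 - 2*(1-t)*β ≤ 0 := by nlinarith
  nlinarith [mul_nonneg (neg_nonneg.2 hcoef) (sub_nonneg.2 hS1), mul_nonneg hR (neg_nonneg.2 hf)]

private lemma coco {H : Type*} [NormedAddCommGroup H] [InnerProductSpace ℝ H]
    {α : ℝ} (hα0 : 0 < α) {T : H → H} (hT : AveragedNE α T) (x y : H) :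
    (1/(2*α)) * ‖(x - T x) - (y - T y)‖^2 ≤ ⟪(x - T x) - (y - T y), x - y⟫ := by
  obtain ⟨N, hN, hTe⟩ := hT
  have key : (x - T x) - (y - T y) = α • ((x - y) - (N x - N y)) := by
    rw [hTe x, hTe y]; module
  rw [key]
  set d := x - y
  set e := N x - N y
  have hne : ‖e‖ ≤ ‖d‖ := hN x y
  have h1 : ‖α • (d - e)‖^2 = α^2 * ‖d - e‖^2 := by
    rw [norm_smul]; simp [mul_pow, abs_of_pos hα0]
  have h2 : ⟪α • (d - e), d⟫ = α * ⟪d - e, d⟫ := real_inner_smul_left _ _ _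
  rw [h1, h2]
  have h3 : ‖d - e‖^2 = ‖d‖^2 - 2*⟪d, e⟫ + ‖e‖^2 := by
    rw [norm_sub_sq_real]
  have h4 : ⟪d - e, d⟫ = ‖d‖^2 - ⟪d, e⟫ := by
    rw [inner_sub_left, real_inner_self_eq_norm_sq, real_inner_comm]
  have key2 : ‖d - e‖^2 ≤ 2 * ⟪d - e, d⟫ := by
    rw [h3, h4]; nlinarith [hne, norm_nonneg e, norm_nonneg d]
  have h5 : (1/(2*α)) * (α^2 * ‖d - e‖^2) = (α/2) * ‖d - e‖^2 := by
    field_simp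
  rw [h5]
  nlinarith

private lemma nonexp_of_avg {H : Type*} [NormedAddCommGroup H] [InnerProductSpace ℝ H]
    {α : ℝ} (hα0 : 0 < α) (hα1 : α ≤ 1) {T : H → H}
    (hT : AveragedNE α T) : Nonexpansive T := by
  obtain ⟨N, hN, hTe⟩ := hT
  intro x y
  have h : T x - T y = (1-α) • (x - y) + α • (N x - N y) := by
    rw [hTe x, hTe y]; module
  calc ‖T x - T y‖ = ‖(1-α) • (x - y) + α • (N x - N y)‖ := by rw [h]
    _ ≤ ‖(1-α) • (x - y)‖ + ‖α • (N x - N y)‖ := norm_add_le _ _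
    _ = (1-α) * ‖x - y‖ + α * ‖N x - N y‖ := by
        rw [norm_smul, norm_smul, Real.norm_eq_abs, Real.norm_eq_abs,
          abs_of_nonneg (by linarith), abs_of_pos hα0]
    _ ≤ (1-α) * ‖x - y‖ + α * ‖x - y‖ := by nlinarith [hN x y]
    _ = ‖x - y‖ := by ring

private lemma expand3 {H : Type*} [NormedAddCommGroup H] [InnerProductSpace ℝ H]
    (a r s : H) (c1 c2 : ℝ) :
    ‖a + c1 • r + c2 • s‖^2 = ‖a‖^2 + c1^2*‖r‖^2 + c2^2*‖s‖^2
      + 2*c1*⟪a,r⟫ + 2*c2*⟪a,s⟫ + 2*c1*c2*⟪r,s⟫ := by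
  have h : ∀ v : H, ‖v‖^2 = ⟪v,v⟫ := fun v => (real_inner_self_eq_norm_sq v).symm
  rw [h, h, h, h]
  simp only [inner_add_left, inner_add_right, real_inner_smul_left, real_inner_smul_right]
  rw [real_inner_comm r a, real_inner_comm s a, real_inner_comm s r]
  ring

set_option maxHeartbeats 1000000 in
private lemma step {H : Type*} [NormedAddCommGroup H] [InnerProductSpace ℝ H]
    {α : ℝ} (hα : α ∈ Set.Ioc (0 : ℝ) (1/2)) {t : ℝ} (ht : t ∈ Set.Ioo (0:ℝ) 1)
    {T : H → H} (hT : AveragedNE α T) (θv : ℝ) (x xhat : H)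
    (hfix : T xhat = xhat) (hx : T x ≠ x)
    (hθv : θv = -⟪T x - x, T x - T (T x)⟫ / ‖T x - x‖^2) :
    ‖(1 - t) • T (T x) + t • (T x + θv • (T x - x)) - xhat‖^2
      + (1-t)^2*(1-α)/α * ‖T x - x‖^2 ≤ ‖x - xhat‖^2 := by
  obtain ⟨hα0, hα12⟩ := hα
  obtain ⟨ht0, ht1⟩ := ht
  set a := x - xhat with ha
  set r := T x - x with hr
  set s := T (T x) - T x with hs
  set β := 1/(2*α) with hβdef
  have hβ : 1 ≤ β := by rw [hβdef, le_div_iff₀ (by linarith)]; linarith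
  have hRpos : (0:ℝ) < ‖r‖^2 :=
    pow_pos (norm_pos_iff.mpr (sub_ne_zero.2 hx)) 2
  -- inner product of r and s
  have hw : ⟪r,s⟫ = θv * ‖r‖^2 := by
    have e0 : T x - T (T x) = -s := by rw [hs]; module
    rw [hθv, e0, inner_neg_right]
    have hr0 : ‖r‖ ≠ 0 := norm_ne_zero_iff.mpr (sub_ne_zero.2 hx)
    field_simp
  -- cocoercivity at (x, xhat)
  have hp : ⟪a,r⟫ ≤ -(β*‖r‖^2) := by
    have c1 := coco hα0 hT x xhat
    have e1 : (x - T x) - (xhat - T xhat) = -r := by rw [hfix, hr]; module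
    rw [e1] at c1
    rw [norm_neg, inner_neg_left, real_inner_comm] at c1
    rw [← ha, ← hβdef] at c1
    linarith
  -- cocoercivity at (T x, xhat)
  have hq : ⟪a,s⟫ + ⟪r,s⟫ ≤ -(β*‖s‖^2) := by
    have c2 := coco hα0 hT (T x) xhat
    have e2 : (T x - T (T x)) - (xhat - T xhat) = -s := by rw [hfix, hs]; module
    have e3 : T x - xhat = a + r := by rw [ha, hr]; module
    rw [e2, e3] at c2
    rw [norm_neg, inner_neg_left, inner_add_right] at c2
    rw [← hβdef] at c2
    linarith [c2, real_inner_comm s a, real_inner_comm s r]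
  -- nonexpansiveness: S ≤ R
  have hSR : ‖s‖^2 ≤ ‖r‖^2 := by
    have h := nonexp_of_avg hα0 (by linarith) hT (T x) x
    rw [← hr, ← hs] at h
    exact pow_le_pow_left₀ (norm_nonneg _) h 2
  -- Cauchy-Schwarz
  have hCS : ⟪r,s⟫^2 ≤ ‖r‖^2 * ‖s‖^2 := by
    have h := abs_real_inner_le_norm r s
    nlinarith [abs_nonneg ⟪r,s⟫, sq_abs ⟪r,s⟫, norm_nonneg r, norm_nonneg s]
  have hθR : θv^2 * ‖r‖^2 ≤ ‖s‖^2 := by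
    rw [hw] at hCS
    nlinarith [hRpos]
  have hθ1 : θv^2 ≤ 1 := by nlinarith [hRpos]
  have hc1 : (0:ℝ) ≤ 1 + t*θv := by nlinarith [sq_nonneg (θv+1)]
  have hu : (1 - t) • T (T x) + t • (T x + θv • r) - xhat
      = a + (1 + t*θv) • r + (1-t) • s := by
    rw [ha, hr, hs]; module
  rw [hu, expand3]
  have hC : (1-t)^2*(1-α)/α = (1-t)^2*(2*β-1) := by
    rw [hβdef]; field_simp
  rw [hC]
  have hsc := scalar β t θv (‖r‖^2) (‖s‖^2) hβ ht0 ht1 hθ1 hRpos.le hθR hSR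
  have hw' : θv * ⟪r,s⟫ = θv^2 * ‖r‖^2 := by rw [hw]; ring
  nlinarith [hsc, mul_nonneg hc1 (by linarith : (0:ℝ) ≤ -(β*‖r‖^2) - ⟪a,r⟫),
    mul_nonneg (by linarith : (0:ℝ) ≤ 1 - t)
      (by linarith : (0:ℝ) ≤ -(β*‖s‖^2) - (⟪a,s⟫ + ⟪r,s⟫)), hw, hw']

theorem stmt_8 {H : Type*} [NormedAddCommGroup H] [InnerProductSpace ℝ H]
    [CompleteSpace H]
    (α : ℝ) (hα : α ∈ Set.Ioc (0 : ℝ) (1/2))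
    (T : H → H) (hT : AveragedNE α T)
    (hfix : ∃ z, T z = z)
    (t : ℝ) (ht : t ∈ Set.Ioo (0 : ℝ) 1)
    (x : ℕ → H) (θ : ℕ → ℝ)
    (hTx : ∀ k, T (x k) ≠ x k)
    (hθ : ∀ k, θ k = -⟪T (x k) - x k, T (x k) - T (T (x k))⟫ / ‖T (x k) - x k‖ ^ 2)
    (hrec : ∀ k, x (k + 1) =
      (1 - t) • T (T (x k)) + t • (T (x k) + θ k • (T (x k) - x k))) :
    Summable (fun k => ‖T (x k) - x k‖ ^ 2) ∧
    ∀ xhat, T xhat = xhat →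
      ((1 - t) ^ 2 * (1 - α) / α) * ∑' k, ‖T (x k) - x k‖ ^ 2 ≤ ‖x 0 - xhat‖ ^ 2 := by
  set C : ℝ := (1 - t)^2 * (1 - α) / α with hCdef
  have hC : 0 < C := by
    rw [hCdef]
    have h1 : (0:ℝ) < 1 - t := by linarith [ht.2]
    have h2 : (0:ℝ) < 1 - α := by linarith [hα.2]
    exact div_pos (mul_pos (pow_pos h1 2) h2) hα.1
  have hstep : ∀ xhat, T xhat = xhat → ∀ k,
      ‖x (k+1) - xhat‖^2 + C * ‖T (x k) - x k‖^2 ≤ ‖x k - xhat‖^2 := by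
    intro xhat hfx k
    rw [hrec k]
    have := step hα ht hT (θ k) (x k) xhat hfx (hTx k) (hθ k)
    linarith [this]
  have hsum : ∀ xhat, T xhat = xhat → ∀ n,
      ∑ k ∈ Finset.range n, C * ‖T (x k) - x k‖^2 ≤ ‖x 0 - xhat‖^2 := by
    intro xhat hfx n
    have key : ∀ n, ∑ k ∈ Finset.range n, C * ‖T (x k) - x k‖^2
        ≤ ‖x 0 - xhat‖^2 - ‖x n - xhat‖^2 := by
      intro n
      induction n with
      | zero => simp
      | succ m ih =>
        rw [Finset.sum_range_succ]
        have := hstep xhat hfx m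
        linarith
    have := key n
    nlinarith [sq_nonneg ‖x n - xhat‖]
  obtain ⟨z, hz⟩ := hfix
  have hsummable : Summable (fun k => C * ‖T (x k) - x k‖^2) := by
    apply summable_of_sum_range_le (c := ‖x 0 - z‖^2)
    · intro k; positivity
    · exact hsum z hz
  constructor
  · have := (summable_mul_left_iff hC.ne').mp hsummable
    exact this
  · intro xhat hfx
    rw [← tsum_mul_left]
    exact Summable.tsum_le_of_sum_range_le hsummable (hsum xhat hfx)
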